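/- Under the same setup, there exists yₙ → ∞ such that conditionally on {Mₙ ≥ aₙxₙ}, with probability tending to 1 exactly one of ξ₁,…,ξₙ exceeds aₙxₙ while all others are smaller than xₙ/yₙ. -/

import Mathlib

open Filter MeasureTheory ProbabilityTheory

section aux
lemma pow_one_sub_le (n : ℕ) (p : ℝ) (h0 : 0 ≤ p) (h1 : p ≤ 1) :
    (1 - p) ^ n ≤ 1 - n * p + (n^2 / 2) * p^2 := by
  induction n with
  | zero => simp
  | succ n ih =>
    have h2 : (0:ℝ) ≤ 1 - p := by linarith
    push_cast
    calc (1-p)^(n+1) = (1-p)^n * (1-p) := by ring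
    _ ≤ (1 - n*p + (n^2/2)*p^2) * (1-p) := mul_le_mul_of_nonneg_right ih h2
    _ ≤ 1 - ((n:ℝ)+1) * p + (((n:ℝ)+1)^2/2) * p^2 := by nlinarith [mul_nonneg (mul_nonneg (by positivity : (0:ℝ) ≤ (n:ℝ)^2/2) h0) (sq_nonneg p)]

lemma ellpos (ℓ Fbar : ℝ → ℝ) (hnn : ∀ x, 0 ≤ Fbar x)
    (htail : ∀ x > (0:ℝ), Fbar x = ℓ x / x)
    (hslow : ∀ l > (0:ℝ), Tendsto (fun x => ℓ (l * x) / ℓ x) atTop (nhds 1)) :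
    ∀ᶠ z in atTop, 0 < ℓ z := by
  have h1 := (hslow 1 one_pos).eventually (lt_mem_nhds (show (1:ℝ)/2 < 1 by norm_num))
  filter_upwards [h1, eventually_gt_atTop (0:ℝ)] with z hz hz0
  rw [one_mul] at hz
  have hne : ℓ z ≠ 0 := by
    intro h; rw [h] at hz; norm_num at hz
  have : ℓ z = z * Fbar z := by
    have := htail z hz0
    field_simp at this
    linarith [this]
  have : 0 ≤ ℓ z := this ▸ mul_nonneg hz0.le (hnn z)
  exact lt_of_le_of_ne this (Ne.symm hne)

lemma karamata (ℓ Fbar G : ℝ → ℝ)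
    (hanti : Antitone Fbar) (hnn : ∀ x, 0 ≤ Fbar x) (hb : ∀ x, Fbar x ≤ 1)
    (htail : ∀ x > (0:ℝ), Fbar x = ℓ x / x)
    (hslow : ∀ l > (0:ℝ), Tendsto (fun x => ℓ (l * x) / ℓ x) atTop (nhds 1))
    (hG : ∀ x, G x = ∫ t in Set.Ioc 0 x, Fbar t) :
    Tendsto (fun z => ℓ z / G z) atTop (nhds 0) := by
  have hFm : Measurable Fbar := hanti.measurable
  have hInt : ∀ a b : ℝ, IntegrableOn Fbar (Set.Ioc a b) := by
    intro a b
    refine Integrable.mono' (g := fun _ => (1:ℝ)) ?_ (hFm.aestronglyMeasurable.restrict) ?_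
    · exact integrableOn_const measure_Ioc_lt_top.ne
    · exact Eventually.of_forall fun t => by
        rw [Real.norm_eq_abs, abs_of_nonneg (hnn t)]; exact hb t
  have hseg : ∀ a b : ℝ, a ≤ b → (b - a) * Fbar b ≤ ∫ t in Set.Ioc a b, Fbar t := by
    intro a b hab
    have h1 : ∫ _ in Set.Ioc a b, Fbar b = (b - a) * Fbar b := by
      rw [setIntegral_const, measureReal_def, Real.volume_Ioc, ENNReal.toReal_ofReal (by linarith), smul_eq_mul]
    rw [← h1]
    exact setIntegral_mono_on (integrableOn_const measure_Ioc_lt_top.ne) (hInt a b)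
      measurableSet_Ioc (fun t ht => hanti ht.2)
  have hadd : ∀ a b c : ℝ, a ≤ b → b ≤ c →
      (∫ t in Set.Ioc a c, Fbar t) = (∫ t in Set.Ioc a b, Fbar t) + ∫ t in Set.Ioc b c, Fbar t := by
    intro a b c hab hbc
    rw [← Set.Ioc_union_Ioc_eq_Ioc hab hbc,
      setIntegral_union (Set.Ioc_disjoint_Ioc_of_le le_rfl) measurableSet_Ioc (hInt a b) (hInt b c)]
  have hellnn := ellpos ℓ Fbar hnn htail hslow
  have hℓeq : ∀ w : ℝ, 0 < w → ℓ w = w * Fbar w := by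
    intro w hw
    have := htail w hw
    field_simp at this
    linarith [this]
  have claim : ∀ m : ℕ, ∀ᶠ z in atTop, (m : ℝ) * (ℓ z / 4) ≤ ∫ t in Set.Ioc (z / 2^m) z, Fbar t := by
    intro m
    induction m with
    | zero =>
      filter_upwards with z
      simp
    | succ m ih =>
      have hs := (hslow ((2:ℝ)^m)⁻¹ (by positivity)).eventually
        (le_mem_nhds (show (1:ℝ)/2 < 1 by norm_num)) -- eventually 1/2 ≤ ratio? need ge
      filter_upwards [ih, hs, eventually_gt_atTop (0:ℝ), hellnn] with z ihz hsz hz0 hlz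
      have hw : (0:ℝ) < z / 2^m := by positivity
      have h2m : (2:ℝ)^m ≤ 2^(m+1) := by
        rw [pow_succ]; nlinarith [pow_pos (show (0:ℝ)<2 by norm_num) m]
      have hle1 : z / 2^(m+1) ≤ z / 2^m := by gcongr
      have hle2 : z / 2^m ≤ z := div_le_self hz0.le (one_le_pow₀ (by norm_num))
      have hsplit := hadd (z / 2^(m+1)) (z / 2^m) z hle1 hle2
      have hseg1 : (z / 2^m - z / 2^(m+1)) * Fbar (z / 2^m) ≤ ∫ t in Set.Ioc (z / 2^(m+1)) (z / 2^m), Fbar t := by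
        exact hseg _ _ hle1
      have hval : (z / 2^m - z / 2^(m+1)) * Fbar (z / 2^m) = ℓ (z / 2^m) / 2 := by
        rw [hℓeq _ hw]
        field_simp
        ring
      have hratio : ℓ z / 2 ≤ ℓ (z / 2^m) := by
        have : ((2:ℝ)^m)⁻¹ * z = z / 2^m := by field_simp
        rw [this] at hsz
        calc ℓ z / 2 = (1/2) * ℓ z := by ring
        _ ≤ (ℓ (z / 2^m) / ℓ z) * ℓ z := mul_le_mul_of_nonneg_right hsz hlz.le
        _ = ℓ (z / 2^m) := by field_simp
      push_cast
      rw [hsplit]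
      have : ℓ z / 4 ≤ ∫ t in Set.Ioc (z / 2^(m+1)) (z / 2^m), Fbar t := by
        calc ℓ z / 4 = (ℓ z / 2) / 2 := by ring
        _ ≤ ℓ (z / 2^m) / 2 := by linarith
        _ = (z / 2^m - z / 2^(m+1)) * Fbar (z / 2^m) := hval.symm
        _ ≤ _ := hseg1
      linarith
  rw [NormedAddCommGroup.tendsto_nhds_zero]
  intro ε hε
  obtain ⟨m, hm⟩ := exists_nat_gt (4 / ε)
  have hm0 : (0:ℝ) < m := lt_trans (by positivity) hm
  filter_upwards [claim m, hellnn, eventually_gt_atTop (0:ℝ)] with z hcz hlz hz0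
  have hGz : (m:ℝ) * (ℓ z / 4) ≤ G z := by
    rw [hG z, hadd 0 (z / 2^m) z (by positivity) (div_le_self hz0.le (one_le_pow₀ (by norm_num)))]
    have h0 : 0 ≤ ∫ t in Set.Ioc 0 (z / 2^m), Fbar t :=
      setIntegral_nonneg measurableSet_Ioc (fun t _ => hnn t)
    linarith
  have hGpos : 0 < G z := lt_of_lt_of_le (by positivity) hGz
  rw [Real.norm_eq_abs, abs_of_nonneg (div_nonneg hlz.le hGpos.le)]
  rw [div_lt_iff₀ hGpos]
  have : 4 / ε < m := hm
  have : 4 * (ℓ z / 4) < ε * ((m:ℝ) * (ℓ z / 4)) := by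
    rw [div_lt_iff₀ hε] at this
    nlinarith
  calc ℓ z = 4 * (ℓ z / 4) := by ring
  _ < ε * ((m:ℝ) * (ℓ z / 4)) := this
  _ ≤ ε * G z := by nlinarith

lemma G_lb (Fbar G : ℝ → ℝ)
    (hanti : Antitone Fbar) (hnn : ∀ x, 0 ≤ Fbar x) (hb : ∀ x, Fbar x ≤ 1)
    (hG : ∀ x, G x = ∫ t in Set.Ioc 0 x, Fbar t) :
    ∀ b : ℝ, 0 ≤ b → b * Fbar b ≤ G b := by
  intro b hb0
  have hFm : Measurable Fbar := hanti.measurable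
  have hInt : IntegrableOn Fbar (Set.Ioc 0 b) := by
    refine Integrable.mono' (g := fun _ => (1:ℝ)) ?_ (hFm.aestronglyMeasurable.restrict) ?_
    · exact integrableOn_const measure_Ioc_lt_top.ne
    · exact Eventually.of_forall fun t => by
        rw [Real.norm_eq_abs, abs_of_nonneg (hnn t)]; exact hb t
  have h1 : ∫ _ in Set.Ioc 0 b, Fbar b = b * Fbar b := by
    rw [setIntegral_const, measureReal_def, Real.volume_Ioc, ENNReal.toReal_ofReal (by linarith), smul_eq_mul,
      sub_zero]
  rw [hG, ← h1]
  exact setIntegral_mono_on (integrableOn_const measure_Ioc_lt_top.ne) hInt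
    measurableSet_Ioc (fun t ht => hanti ht.2)
end aux

theorem stmt15 {Ω : Type*} [MeasurableSpace Ω] (μ : Measure Ω) [IsProbabilityMeasure μ]
    (ξ : ℕ → Ω → ℝ) (hmeas : ∀ i, Measurable (ξ i))
    (hindep : iIndepFun ξ μ)
    (hident : ∀ i, IdentDistrib (ξ i) (ξ 0) μ μ)
    (hξ0 : ∀ i ω, 0 ≤ ξ i ω)
    (ℓ Fbar G : ℝ → ℝ)
    (hFbar : ∀ x, Fbar x = (μ {ω | x ≤ ξ 0 ω}).toReal)
    (htail : ∀ x > (0:ℝ), Fbar x = ℓ x / x)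
    (hslow : ∀ l > (0:ℝ), Tendsto (fun x => ℓ (l * x) / ℓ x) atTop (nhds 1))
    (hG : ∀ x, G x = ∫ t in Set.Ioc 0 x, Fbar t)
    (x a : ℕ → ℝ) (hx : ∀ n, 0 < x n) (hapos : ∀ n, 0 < a n)
    (hliminf : ∃ c > (0:ℝ), ∀ᶠ (n : ℕ) in atTop, c ≤ x n / ((n : ℝ) * G (x n)))
    (A : ℝ) (hA : 0 < A) (ha : Tendsto a atTop (nhds A)) :
    ∃ y : ℕ → ℝ, Tendsto y atTop atTop ∧
      Tendsto (fun n => y n / x n) atTop (nhds 0) ∧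
      Tendsto (fun (n : ℕ) =>
        (μ {ω | (∃ i < n, a n * x n ≤ ξ i ω ∧ ∀ j < n, j ≠ i → ξ j ω < x n / y n)
              ∧ ∃ i < n, a n * x n ≤ ξ i ω}).toReal
          / (μ {ω | ∃ i < n, a n * x n ≤ ξ i ω}).toReal)
        atTop (nhds 1) := by
  -- basic facts about Fbar
  have hanti : Antitone Fbar := by
    intro u v huv
    rw [hFbar, hFbar]
    exact ENNReal.toReal_mono (measure_ne_top μ _)
      (measure_mono (fun ω h => le_trans huv h))
  have hFnn : ∀ t, 0 ≤ Fbar t := fun t => by rw [hFbar]; exact ENNReal.toReal_nonneg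
  have hFb1 : ∀ t, Fbar t ≤ 1 := fun t => by
    rw [hFbar]
    have h := ENNReal.toReal_mono (measure_ne_top μ Set.univ) (measure_mono (Set.subset_univ {ω | t ≤ ξ 0 ω}))
    simpa [measure_univ] using h
  have hellnn := ellpos ℓ Fbar hFnn htail hslow
  have hFpos : ∀ t, 0 < Fbar t := by
    intro t
    obtain ⟨z, hz1, hz2⟩ := (hellnn.and (eventually_ge_atTop (max t 1))).exists
    have hz0 : (0:ℝ) < z := lt_of_lt_of_le one_pos (le_trans (le_max_right t 1) hz2)
    have : 0 < Fbar z := by rw [htail z hz0]; positivity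
    exact lt_of_lt_of_le this (hanti (le_trans (le_max_left t 1) hz2))
  obtain ⟨c, hc0, hcev⟩ := hliminf
  -- x n → ∞
  have hxtop : Tendsto x atTop atTop := by
    rw [tendsto_atTop]
    intro M
    set M' := max M 1 with hM'
    have hFM : 0 < Fbar M' := hFpos M'
    have htz : Tendsto (fun n : ℕ => 1 / ((n:ℝ) * Fbar M')) atTop (nhds 0) := by
      apply Tendsto.div_atTop tendsto_const_nhds
      exact Tendsto.atTop_mul_const hFM tendsto_natCast_atTop_atTop
    filter_upwards [hcev, htz.eventually (gt_mem_nhds hc0), eventually_ge_atTop 1] with n hn1 hn2 hn3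
    by_contra hMx
    push_neg at hMx
    have hxM : x n ≤ M' := le_trans hMx.le (le_max_left M 1)
    have hGlb : x n * Fbar M' ≤ G (x n) :=
      le_trans (mul_le_mul_of_nonneg_left (hanti hxM) (hx n).le)
        (G_lb Fbar G hanti hFnn hFb1 hG (x n) (hx n).le)
    have hnpos : (0:ℝ) < n := by exact_mod_cast hn3
    have hden : (0:ℝ) < (n:ℝ) * (x n * Fbar M') := mul_pos hnpos (mul_pos (hx n) hFM)
    have : x n / ((n:ℝ) * G (x n)) ≤ 1 / ((n:ℝ) * Fbar M') := by
      have h1 : x n / ((n:ℝ) * G (x n)) ≤ x n / ((n:ℝ) * (x n * Fbar M')) := by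
        apply div_le_div_of_nonneg_left (hx n).le hden
        exact mul_le_mul_of_nonneg_left hGlb hnpos.le
      have h2 : x n / ((n:ℝ) * (x n * Fbar M')) = 1 / ((n:ℝ) * Fbar M') := by
        field_simp [(hx n).ne']
      linarith [h1, h2 ▸ h1]
    linarith
  -- n * Fbar (x n) → 0
  have hKar := (karamata ℓ Fbar G hanti hFnn hFb1 htail hslow hG).comp hxtop
  have hnF : Tendsto (fun n : ℕ => (n:ℝ) * Fbar (x n)) atTop (nhds 0) := by
    have hub : ∀ᶠ n : ℕ in atTop, (n:ℝ) * Fbar (x n) ≤ c⁻¹ * (ℓ (x n) / G (x n)) := by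
      filter_upwards [hcev, hxtop.eventually hellnn, eventually_ge_atTop 1] with n hn1 hn2 hn3
      have hnpos : (0:ℝ) < n := by exact_mod_cast hn3
      have hGpos : 0 < G (x n) :=
        lt_of_lt_of_le (mul_pos (hx n) (hFpos (x n)))
          (G_lb Fbar G hanti hFnn hFb1 hG (x n) (hx n).le)
      have hden : 0 < (n:ℝ) * G (x n) := mul_pos hnpos hGpos
      have h3 : c * ((n:ℝ) * G (x n)) ≤ x n := (le_div_iff₀ hden).mp hn1
      have hl0 : 0 ≤ ℓ (x n) := hn2.le
      rw [htail _ (hx n), mul_div_assoc', mul_div_assoc', div_le_div_iff₀ (hx n) hGpos]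
      have h4 : (n:ℝ) * G (x n) ≤ c⁻¹ * x n := by
        rw [le_inv_mul_iff₀ hc0]
        linarith
      nlinarith [mul_le_mul_of_nonneg_left h4 hl0]
    have hup : Tendsto (fun n : ℕ => c⁻¹ * (ℓ (x n) / G (x n))) atTop (nhds 0) := by
      have := hKar.const_mul c⁻¹
      simpa using this
    refine tendsto_of_tendsto_of_tendsto_of_le_of_le' tendsto_const_nhds hup ?_ hub
    filter_upwards with n
    exact mul_nonneg (Nat.cast_nonneg n) (hFnn _)
  -- n * Fbar (l * x n) → 0 for each fixed l > 0
  have key : ∀ l : ℝ, 0 < l → Tendsto (fun n : ℕ => (n:ℝ) * Fbar (l * x n)) atTop (nhds 0) := by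
    intro l hl
    have hprod : Tendsto (fun n : ℕ =>
        ((n:ℝ) * Fbar (x n)) * ((ℓ (l * x n) / ℓ (x n)) * l⁻¹)) atTop (nhds 0) := by
      have h2 : Tendsto (fun n : ℕ => (ℓ (l * x n) / ℓ (x n)) * l⁻¹) atTop (nhds (1 * l⁻¹)) := by
        exact Tendsto.mul_const l⁻¹ ((hslow l hl).comp hxtop)
      have := hnF.mul h2
      simpa using this
    apply hprod.congr'
    filter_upwards [hxtop.eventually hellnn] with n hln
    have hx0 := hx n
    have hlx : 0 < l * x n := mul_pos hl hx0
    rw [htail _ hx0, htail _ hlx]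
    field_simp
  -- construction of y
  set P : ℕ → ℕ → Prop :=
    fun k n => (n:ℝ) * Fbar (x n / ((k:ℝ)+1)) ≤ 1/((k:ℝ)+1) ∧ ((k:ℝ)+1)^2 ≤ x n with hP
  set g : ℕ → ℕ := fun n => Nat.findGreatest (fun k => P k n) n with hg
  set y : ℕ → ℝ := fun n => (g n : ℝ) + 1 with hy
  have hPev : ∀ K : ℕ, ∀ᶠ n in atTop, P K n := by
    intro K
    have h1 : Tendsto (fun n : ℕ => (n:ℝ) * Fbar (x n / ((K:ℝ)+1))) atTop (nhds 0) := by
      apply (key ((K:ℝ)+1)⁻¹ (by positivity)).congr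
      intro n
      rw [inv_mul_eq_div]
    filter_upwards [h1.eventually (ge_mem_nhds (show (0:ℝ) < 1/((K:ℝ)+1) by positivity)),
      hxtop.eventually (eventually_ge_atTop (((K:ℝ)+1)^2))] with n hn1 hn2
    exact ⟨hn1, hn2⟩
  have hyev : ∀ K : ℕ, ∀ᶠ n in atTop, K ≤ g n := by
    intro K
    filter_upwards [hPev K, eventually_ge_atTop K] with n hn1 hn2
    exact Nat.le_findGreatest hn2 hn1
  have hytop : Tendsto y atTop atTop := by
    rw [tendsto_atTop]
    intro M
    obtain ⟨K, hK⟩ := exists_nat_ge M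
    filter_upwards [hyev K] with n hn
    have : (K:ℝ) ≤ g n := by exact_mod_cast hn
    simp only [hy]
    linarith
  have hy1 : ∀ n, (1:ℝ) ≤ y n := by
    intro n
    simp only [hy]
    linarith [Nat.cast_nonneg (α := ℝ) (g n)]
  have hyspec : ∀ᶠ n : ℕ in atTop, (n:ℝ) * Fbar (x n / y n) ≤ 1 / y n ∧ y n ^ 2 ≤ x n := by
    filter_upwards [hPev 1, eventually_ge_atTop 1] with n hn1 hn2
    have hPg : P (g n) n := Nat.findGreatest_spec (P := fun k => P k n) (m := 1) hn2 hn1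
    exact hPg
  have hyx : Tendsto (fun n => y n / x n) atTop (nhds 0) := by
    have hinvy : Tendsto (fun n => 1 / y n) atTop (nhds 0) := by
      simpa [Pi.inv_def] using hytop.inv_tendsto_atTop
    refine tendsto_of_tendsto_of_tendsto_of_le_of_le' tendsto_const_nhds hinvy ?_ ?_
    · filter_upwards with n
      exact div_nonneg (by linarith [hy1 n]) (hx n).le
    · filter_upwards [hyspec] with n hn
      rw [div_le_div_iff₀ (hx n) (by linarith [hy1 n])]
      nlinarith [hn.2, hy1 n]
  have hnq : Tendsto (fun n : ℕ => (n:ℝ) * Fbar (x n / y n)) atTop (nhds 0) := by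
    have hinvy : Tendsto (fun n => 1 / y n) atTop (nhds 0) := by
      simpa [Pi.inv_def] using hytop.inv_tendsto_atTop
    refine tendsto_of_tendsto_of_tendsto_of_le_of_le' tendsto_const_nhds hinvy ?_ ?_
    · filter_upwards with n
      exact mul_nonneg (Nat.cast_nonneg n) (hFnn _)
    · filter_upwards [hyspec] with n hn
      exact hn.1
  -- n * Fbar (a n * x n) → 0
  have hnp : Tendsto (fun n : ℕ => (n:ℝ) * Fbar (a n * x n)) atTop (nhds 0) := by
    refine tendsto_of_tendsto_of_tendsto_of_le_of_le' tendsto_const_nhds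
      (key (A/2) (by positivity)) ?_ ?_
    · filter_upwards with n
      exact mul_nonneg (Nat.cast_nonneg n) (hFnn _)
    · filter_upwards [ha.eventually_const_le (half_lt_self hA)] with n hn
      have : A/2 * x n ≤ a n * x n := mul_le_mul_of_nonneg_right hn (hx n).le
      exact mul_le_mul_of_nonneg_left (hanti this) (Nat.cast_nonneg n)
  refine ⟨y, hytop, hyx, ?_⟩
  -- notation
  set D : ℕ → Set Ω := fun n => ⋃ i ∈ Finset.range n, ξ i ⁻¹' Set.Ici (a n * x n) with hD
  set E : ℕ → Set Ω := fun n => ⋃ i ∈ Finset.range n, (ξ i ⁻¹' Set.Ici (a n * x n) ∩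
    ⋂ j ∈ Finset.range n, ⋂ (_ : j ≠ i), ξ j ⁻¹' Set.Iio (x n / y n)) with hE
  have hDeq : ∀ n, {ω | ∃ i < n, a n * x n ≤ ξ i ω} = D n := by
    intro n
    ext ω
    simp [hD, Set.mem_iUnion]
  have hNeq : ∀ n, {ω | (∃ i < n, a n * x n ≤ ξ i ω ∧ ∀ j < n, j ≠ i → ξ j ω < x n / y n)
      ∧ ∃ i < n, a n * x n ≤ ξ i ω} = E n := by
    intro n
    ext ω
    simp only [Set.mem_setOf_eq, hE, Set.mem_iUnion, Finset.mem_range, Set.mem_inter_iff,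
      Set.mem_preimage, Set.mem_Ici, Set.mem_iInter, Set.mem_Iio, exists_prop]
    constructor
    · rintro ⟨⟨i, hi, h1, h2⟩, -⟩
      exact ⟨i, hi, h1, fun j hj hne => h2 j hj hne⟩
    · rintro ⟨i, hi, h1, h2⟩
      exact ⟨⟨i, hi, h1, fun j hj hne => h2 j hj hne⟩, ⟨i, hi, h1⟩⟩
  have hDm : ∀ n, MeasurableSet (D n) :=
    fun n => Finset.measurableSet_biUnion _ (fun i _ => (hmeas i) measurableSet_Ici)
  have hEm : ∀ n, MeasurableSet (E n) := by
    intro n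
    refine Finset.measurableSet_biUnion _ (fun i _ => ((hmeas i) measurableSet_Ici |>.inter ?_))
    exact Finset.measurableSet_biInter _ (fun j _ =>
      MeasurableSet.iInter (fun _ => (hmeas j) measurableSet_Iio))
  have hED : ∀ n, E n ⊆ D n := by
    intro n
    simp only [hE, hD]
    exact Set.iUnion₂_mono (fun i _ => Set.inter_subset_left)
  set pe : ℕ → ENNReal := fun n => μ (ξ 0 ⁻¹' Set.Ici (a n * x n)) with hpe
  set qe : ℕ → ENNReal := fun n => μ (ξ 0 ⁻¹' Set.Ici (x n / y n)) with hqe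
  have hpreim : ∀ s : ℝ, ξ 0 ⁻¹' Set.Ici s = {ω | s ≤ ξ 0 ω} := fun s => rfl
  have hpeR : ∀ n, (pe n).toReal = Fbar (a n * x n) := by
    intro n
    show (μ (ξ 0 ⁻¹' Set.Ici (a n * x n))).toReal = _
    rw [hpreim, ← hFbar]
  have hqeR : ∀ n, (qe n).toReal = Fbar (x n / y n) := by
    intro n
    show (μ (ξ 0 ⁻¹' Set.Ici (x n / y n))).toReal = _
    rw [hpreim, ← hFbar]
  have hident' : ∀ (i : ℕ) (s : ℝ), μ (ξ i ⁻¹' Set.Ici s) = μ (ξ 0 ⁻¹' Set.Ici s) :=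
    fun i s => (hident i).measure_mem_eq measurableSet_Ici
  have hidentIio : ∀ (i : ℕ) (s : ℝ), μ (ξ i ⁻¹' Set.Iio s) = μ (ξ 0 ⁻¹' Set.Iio s) :=
    fun i s => (hident i).measure_mem_eq measurableSet_Iio
  -- measure of D
  have hmuD : ∀ n, μ (D n) = 1 - (1 - pe n) ^ n := by
    intro n
    have hcompl : (D n)ᶜ = ⋂ i ∈ Finset.range n, ξ i ⁻¹' Set.Iio (a n * x n) := by
      ext ω
      simp [hD, not_le]
    have hprod : μ ((D n)ᶜ) = ∏ i ∈ Finset.range n, μ (ξ i ⁻¹' Set.Iio (a n * x n)) := by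
      rw [hcompl]
      exact hindep.meas_biInter (fun i _ => ⟨Set.Iio _, measurableSet_Iio, rfl⟩)
    have hIio0 : μ (ξ 0 ⁻¹' Set.Iio (a n * x n)) = 1 - pe n := by
      have : Set.Iio (a n * x n) = (Set.Ici (a n * x n))ᶜ := by simp
      rw [this, Set.preimage_compl, prob_compl_eq_one_sub ((hmeas 0) measurableSet_Ici)]
    have h2 : μ ((D n)ᶜ) = (1 - pe n) ^ n := by
      rw [hprod]
      rw [Finset.prod_congr rfl (fun i _ => (hidentIio i _).trans hIio0)]
      simp
    rw [← compl_compl (D n), prob_compl_eq_one_sub (hDm n).compl, h2]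
  have hpe1 : ∀ n, pe n ≤ 1 := fun n => prob_le_one
  have hDR : ∀ n, (μ (D n)).toReal = 1 - (1 - (pe n).toReal) ^ n := by
    intro n
    rw [hmuD n, ENNReal.toReal_sub_of_le (pow_le_one' (tsub_le_self.trans ?_) n) ENNReal.one_ne_top]
    · rw [ENNReal.toReal_pow, ENNReal.toReal_sub_of_le (hpe1 n) ENNReal.one_ne_top, ENNReal.toReal_one]
    · exact le_refl 1
  set C : ℕ → ℕ → ℕ → Set Ω := fun n i j => if i = j then (∅ : Set Ω)
    else (ξ i ⁻¹' Set.Ici (a n * x n) ∩ ξ j ⁻¹' Set.Ici (x n / y n)) with hC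
  have hcov : ∀ n, D n ⊆ E n ∪ ⋃ i ∈ Finset.range n, ⋃ j ∈ Finset.range n, C n i j := by
    intro n ω hω
    by_cases hEω : ω ∈ E n
    · exact Or.inl hEω
    · right
      simp only [hD, Set.mem_iUnion, Finset.mem_range, Set.mem_preimage, Set.mem_Ici,
        exists_prop] at hω
      obtain ⟨i, hi, hξi⟩ := hω
      simp only [hE, Set.mem_iUnion, Finset.mem_range, Set.mem_inter_iff, Set.mem_preimage,
        Set.mem_Ici, Set.mem_iInter, Set.mem_Iio, exists_prop, not_exists, not_and, not_forall,
        not_lt] at hEω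
      obtain ⟨j, hj, hne, hjge⟩ := hEω i hi hξi
      simp only [Set.mem_iUnion, Finset.mem_range, exists_prop]
      refine ⟨i, hi, j, hj, ?_⟩
      rw [hC]
      simp only [if_neg (Ne.symm hne)]
      exact ⟨hξi, hjge⟩
  have hCle : ∀ n i j, μ (C n i j) ≤ pe n * qe n := by
    intro n i j
    by_cases hij : i = j
    · simp [hC, hij]
    · have hind := (hindep.indepFun hij).measure_inter_preimage_eq_mul
        (Set.Ici (a n * x n)) (Set.Ici (x n / y n)) measurableSet_Ici measurableSet_Ici
      rw [hC]
      simp only [if_neg hij]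
      rw [hind, hident' i, hident' j]
  have hbound : ∀ n, μ (D n) ≤ μ (E n) + (n : ENNReal) * ((n : ENNReal) * (pe n * qe n)) := by
    intro n
    calc μ (D n) ≤ μ (E n ∪ ⋃ i ∈ Finset.range n, ⋃ j ∈ Finset.range n, C n i j) :=
        measure_mono (hcov n)
    _ ≤ μ (E n) + μ (⋃ i ∈ Finset.range n, ⋃ j ∈ Finset.range n, C n i j) := measure_union_le _ _
    _ ≤ μ (E n) + (n : ENNReal) * ((n : ENNReal) * (pe n * qe n)) := by
        gcongr
        calc μ (⋃ i ∈ Finset.range n, ⋃ j ∈ Finset.range n, C n i j)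
            ≤ ∑ i ∈ Finset.range n, μ (⋃ j ∈ Finset.range n, C n i j) :=
            measure_biUnion_finset_le _ _
        _ ≤ ∑ _i ∈ Finset.range n, ((n : ENNReal) * (pe n * qe n)) := by
            apply Finset.sum_le_sum
            intro i _
            calc μ (⋃ j ∈ Finset.range n, C n i j) ≤ ∑ j ∈ Finset.range n, μ (C n i j) :=
                measure_biUnion_finset_le _ _
            _ ≤ ∑ _j ∈ Finset.range n, (pe n * qe n) := Finset.sum_le_sum (fun j _ => hCle n i j)
            _ = (n : ENNReal) * (pe n * qe n) := by simp [Finset.sum_const, mul_comm]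
        _ = (n : ENNReal) * ((n : ENNReal) * (pe n * qe n)) := by simp [Finset.sum_const, mul_comm]
  have hpene : ∀ n, pe n ≠ ⊤ := fun n => measure_ne_top μ _
  have hqene : ∀ n, qe n ≠ ⊤ := fun n => measure_ne_top μ _
  have hboundR : ∀ n, (μ (D n)).toReal ≤
      (μ (E n)).toReal + (n:ℝ) * ((n:ℝ) * ((pe n).toReal * (qe n).toReal)) := by
    intro n
    have h := hbound n
    have hne : μ (E n) + (n : ENNReal) * ((n : ENNReal) * (pe n * qe n)) ≠ ⊤ := by
      apply ENNReal.add_ne_top.2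
      exact ⟨measure_ne_top μ _, ENNReal.mul_ne_top (ENNReal.natCast_ne_top n)
        (ENNReal.mul_ne_top (ENNReal.natCast_ne_top n)
          (ENNReal.mul_ne_top (hpene n) (hqene n)))⟩
    have := ENNReal.toReal_mono hne h
    rwa [ENNReal.toReal_add (measure_ne_top μ _) (ENNReal.mul_ne_top (ENNReal.natCast_ne_top n)
        (ENNReal.mul_ne_top (ENNReal.natCast_ne_top n)
          (ENNReal.mul_ne_top (hpene n) (hqene n)))),
      ENNReal.toReal_mul, ENNReal.toReal_mul, ENNReal.toReal_mul, ENNReal.toReal_natCast] at this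
  have hEDR : ∀ n, (μ (E n)).toReal ≤ (μ (D n)).toReal :=
    fun n => ENNReal.toReal_mono (measure_ne_top μ _) (measure_mono (hED n))
  -- final squeeze
  have hfun : ∀ n : ℕ, (μ {ω | (∃ i < n, a n * x n ≤ ξ i ω ∧ ∀ j < n, j ≠ i → ξ j ω < x n / y n)
        ∧ ∃ i < n, a n * x n ≤ ξ i ω}).toReal / (μ {ω | ∃ i < n, a n * x n ≤ ξ i ω}).toReal
      = (μ (E n)).toReal / (μ (D n)).toReal := by
    intro n
    rw [hNeq n, hDeq n]
  refine Tendsto.congr (fun n => (hfun n).symm) ?_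
  have hlow : Tendsto (fun n : ℕ => 1 - 2*((n:ℝ) * Fbar (x n / y n))) atTop (nhds 1) := by
    have h : Tendsto (fun n : ℕ => (1:ℝ) - 2*((n:ℝ) * Fbar (x n / y n))) atTop
        (nhds (1 - 2*0)) := Tendsto.sub tendsto_const_nhds (hnq.const_mul 2)
    simpa using h
  refine tendsto_of_tendsto_of_tendsto_of_le_of_le' hlow tendsto_const_nhds ?_ ?_
  · filter_upwards [hnp.eventually_lt_const (by norm_num : (0:ℝ) < 1), eventually_ge_atTop 1]
      with n h1 h2
    have hnpos : (0:ℝ) < n := by exact_mod_cast h2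
    have hpR : (pe n).toReal = Fbar (a n * x n) := hpeR n
    have hqR : (qe n).toReal = Fbar (x n / y n) := hqeR n
    have hppos : 0 < (pe n).toReal := by rw [hpR]; exact hFpos _
    have hp1 : (pe n).toReal ≤ 1 := by rw [hpR]; exact hFb1 _
    have hq0 : 0 ≤ (qe n).toReal := ENNReal.toReal_nonneg
    have hpow := pow_one_sub_le n (pe n).toReal hppos.le hp1
    have hnp1 : (n:ℝ) * (pe n).toReal ≤ 1 := by rw [hpR]; exact h1.le
    have hDge : (n:ℝ) * (pe n).toReal / 2 ≤ (μ (D n)).toReal := by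
      rw [hDR n]
      nlinarith [mul_nonneg (mul_nonneg hnpos.le hppos.le)
        (sub_nonneg.2 hnp1), sq_nonneg ((n:ℝ) * (pe n).toReal)]
    have hDpos : 0 < (μ (D n)).toReal := by
      have : 0 < (n:ℝ) * (pe n).toReal / 2 := by positivity
      linarith
    rw [← hqR, le_div_iff₀ hDpos]
    have hbb := hboundR n
    nlinarith [mul_le_mul_of_nonneg_left hDge
      (by positivity : (0:ℝ) ≤ 2 * ((n:ℝ) * (qe n).toReal))]
  · filter_upwards with n
    exact div_le_one_of_le₀ (hEDR n) ENNReal.toReal_nonneg
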